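/- Let T ≥ 1, and let U⁽¹⁾, …, U⁽ᵀ⁾ ∈ ℝ^{p×q}, X⁽¹⁾, …, X⁽ᵀ⁾ ∈ ℝ^{q×N}, U⁰ ∈ ℝ^{p×q}, λ > 0, and c > 0. Suppose the exact Gram alignment X⁽ᵗ⁾ (X⁽ᵗ⁾)ᵀ = c · (U⁽ᵗ⁾)ᵀ U⁽ᵗ⁾ holds for every t = 1, …, T, and set Y⁽ᵗ⁾ = U⁽ᵗ⁾ X⁽ᵗ⁾, Y = [Y⁽¹⁾, …, Y⁽ᵀ⁾], X = [X⁽¹⁾, …, X⁽ᵀ⁾], and λ̃ = λ / c. Then the closed-form MAP solution satisfies (Y Xᵀ + λ U⁰)(X Xᵀ + λ I)⁻¹ = (Σ_{t=1}^{T} U⁽ᵗ⁾ (U⁽ᵗ⁾)ᵀ U⁽ᵗ⁾ + λ̃ U⁰)(Σ_{t=1}^{T} (U⁽ᵗ⁾)ᵀ U⁽ᵗ⁾ + λ̃ I)⁻¹. (Data-free closed-form estimate of the merged task vector.) -/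
import Mathlib


open Matrix

/-- Horizontal concatenation `[A⁽¹⁾, …, A⁽ᵀ⁾]` of `T` matrices with `N` columns
each, the columns being indexed by pairs `(t, n)`. -/
def hcat {p N T : ℕ} (A : Fin T → Matrix (Fin p) (Fin N) ℝ) :
    Matrix (Fin p) (Fin T × Fin N) ℝ :=
  Matrix.of fun i tn => A tn.1 i tn.2

lemma hcat_mul_transpose {p r N T : ℕ} (A : Fin T → Matrix (Fin p) (Fin N) ℝ)
    (B : Fin T → Matrix (Fin r) (Fin N) ℝ) :
    hcat A * (hcat B)ᵀ = ∑ t, A t * (B t)ᵀ := by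
  ext i j
  simp [hcat, Matrix.mul_apply, Matrix.sum_apply, Fintype.sum_prod_type]

/-- data-free closed-form estimate of the merged task vector:
if `X⁽ᵗ⁾ (X⁽ᵗ⁾)ᵀ = c (U⁽ᵗ⁾)ᵀ U⁽ᵗ⁾` for every `t`, then with `Y⁽ᵗ⁾ = U⁽ᵗ⁾ X⁽ᵗ⁾`,
`Y = [Y⁽¹⁾, …, Y⁽ᵀ⁾]`, `X = [X⁽¹⁾, …, X⁽ᵀ⁾]`, `λ̃ = λ/c`, one has
`(Y Xᵀ + λ U⁰)(X Xᵀ + λ I)⁻¹ =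
 (Σ_t U⁽ᵗ⁾ (U⁽ᵗ⁾)ᵀ U⁽ᵗ⁾ + λ̃ U⁰)(Σ_t (U⁽ᵗ⁾)ᵀ U⁽ᵗ⁾ + λ̃ I)⁻¹`. -/
theorem data_free_closed_form {p q N : ℕ} (T : ℕ) (hT : 1 ≤ T)
    (Uf : Fin T → Matrix (Fin p) (Fin q) ℝ)
    (Xf : Fin T → Matrix (Fin q) (Fin N) ℝ)
    (U0 : Matrix (Fin p) (Fin q) ℝ) (lam c : ℝ) (hlam : 0 < lam) (hc : 0 < c)
    (halign : ∀ t, Xf t * (Xf t)ᵀ = c • ((Uf t)ᵀ * Uf t)) :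
    (hcat (fun t => Uf t * Xf t) * (hcat Xf)ᵀ + lam • U0)
        * (hcat Xf * (hcat Xf)ᵀ + lam • (1 : Matrix (Fin q) (Fin q) ℝ))⁻¹
      = ((∑ t, Uf t * (Uf t)ᵀ * Uf t) + (lam / c) • U0)
        * ((∑ t, (Uf t)ᵀ * Uf t) + (lam / c) • (1 : Matrix (Fin q) (Fin q) ℝ))⁻¹ := by
  set A : Matrix (Fin p) (Fin q) ℝ := (∑ t, Uf t * (Uf t)ᵀ * Uf t) + (lam / c) • U0 with hA
  set B : Matrix (Fin q) (Fin q) ℝ :=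
    (∑ t, (Uf t)ᵀ * Uf t) + (lam / c) • (1 : Matrix (Fin q) (Fin q) ℝ) with hB
  have hc0 : c ≠ 0 := hc.ne'
  -- numerator
  have hnum : hcat (fun t => Uf t * Xf t) * (hcat Xf)ᵀ + lam • U0 = c • A := by
    rw [hcat_mul_transpose]
    have : ∀ t : Fin T, (Uf t * Xf t) * (Xf t)ᵀ = c • (Uf t * (Uf t)ᵀ * Uf t) := by
      intro t
      rw [Matrix.mul_assoc, halign t, Matrix.mul_smul, ← Matrix.mul_assoc]
    simp_rw [this, ← Finset.smul_sum, hA, smul_add, smul_smul,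
      mul_div_cancel₀ _ hc0]
  -- denominator
  have hden : hcat Xf * (hcat Xf)ᵀ + lam • (1 : Matrix (Fin q) (Fin q) ℝ) = c • B := by
    rw [hcat_mul_transpose]
    simp_rw [halign, ← Finset.smul_sum, hB, smul_add, smul_smul,
      mul_div_cancel₀ _ hc0]
  -- B is positive definite
  have hBpd : B.PosDef := by
    apply Matrix.PosDef.posSemidef_add
    · have : ∀ t : Fin T, ((Uf t)ᵀ * Uf t).PosSemidef := by
        intro t
        have := Matrix.posSemidef_conjTranspose_mul_self (Uf t)
        simpa using this
      classical
      refine Finset.sum_induction _ _ (fun a b ha hb => ha.add hb)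
        (Matrix.PosSemidef.zero) (fun t _ => this t)
    · rw [Matrix.smul_one_eq_diagonal]
      exact Matrix.posDef_diagonal_iff.mpr fun _ => by positivity
  have hdet : IsUnit B.det := hBpd.det_pos.ne'.isUnit
  rw [hnum, hden]
  haveI : Invertible c := invertibleOfNonzero hc0
  rw [Matrix.inv_smul (A := B) c hdet, Matrix.smul_mul, Matrix.mul_smul, smul_smul,
    mul_invOf_self, one_smul]
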